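/- Let T ≥ 1, let β_1,…,β_T be positive reals, σ_1,…,σ_T be positive reals, and C > 0. Suppose r ∈ ℝ^T, ν ∈ ℝ, and λ ∈ ℝ^T satisfy the KKT conditions: Σ_{t=1}^T r_t² ≤ C; ν ≥ 0; ν·(Σ_{t=1}^T r_t² − C) = 0; r_t ≥ 0, λ_t ≥ 0, and λ_t r_t = 0 for all t; and the stationarity conditions −(β_t/(√(2π) σ_t)) exp(−r_t²/(2σ_t²)) + 2ν r_t − λ_t = 0 for all t. Then ν > 0, Σ_{t=1}^T r_t² = C, and for every t: r_t > 0, λ_t = 0, and (r_t/σ_t)² · exp((r_t/σ_t)²) = β_t² / (8π σ_t⁴ ν²). -/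

import Mathlib

open Finset

/-- Theorem 5 (KKT characterization of optimal power allocation): if
`(r, ν, λ)` satisfies the KKT conditions of the problem
`minimize ∑ t, β t Q(r t / σ t)` subject to `∑ t, r t ² ≤ C`, `r t ≥ 0`,
then `ν > 0`, the power budget is tight, and for every `t`: `r t > 0`,
`λ t = 0`, and the SNR `(r t/σ t)²` satisfies
`(r t/σ t)² exp((r t/σ t)²) = β t²/(8π σ t⁴ ν²)` (i.e. it equals the Lambert
W value `W(β t²/(8π σ t⁴ ν²))`). -/
theorem power_allocation_kkt {T : ℕ} (hT : 1 ≤ T)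
    (β σ : Fin T → ℝ) (hβ : ∀ t, 0 < β t) (hσ : ∀ t, 0 < σ t)
    (C : ℝ) (hC : 0 < C)
    (r : Fin T → ℝ) (ν : ℝ) (lam : Fin T → ℝ)
    (hbudget : ∑ t, (r t) ^ 2 ≤ C)
    (hν0 : 0 ≤ ν)
    (hcomp : ν * (∑ t, (r t) ^ 2 - C) = 0)
    (hr0 : ∀ t, 0 ≤ r t) (hlam0 : ∀ t, 0 ≤ lam t)
    (hcs : ∀ t, lam t * r t = 0)
    (hstat : ∀ t, -(β t / (Real.sqrt (2 * Real.pi) * σ t))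
        * Real.exp (-(r t) ^ 2 / (2 * (σ t) ^ 2)) + 2 * ν * r t - lam t = 0) :
    0 < ν ∧ (∑ t, (r t) ^ 2 = C) ∧
    ∀ t, 0 < r t ∧ lam t = 0 ∧
      (r t / σ t) ^ 2 * Real.exp ((r t / σ t) ^ 2)
        = (β t) ^ 2 / (8 * Real.pi * (σ t) ^ 4 * ν ^ 2) := by
  have hsqrt : 0 < Real.sqrt (2 * Real.pi) := Real.sqrt_pos.mpr (by positivity)
  -- positivity of the exponential coefficient
  have hA : ∀ t, 0 < β t / (Real.sqrt (2 * Real.pi) * σ t)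
      * Real.exp (-(r t) ^ 2 / (2 * (σ t) ^ 2)) := by
    intro t
    have := hβ t; have := hσ t
    positivity
  -- r t > 0 for all t
  have hrpos : ∀ t, 0 < r t := by
    intro t
    rcases lt_or_eq_of_le (hr0 t) with h | h
    · exact h
    · exfalso
      have hs := hstat t
      rw [← h] at hs
      have he : Real.exp (-(0:ℝ) ^ 2 / (2 * (σ t) ^ 2)) = 1 := by norm_num
      rw [he] at hs
      have hpos : 0 < β t / (Real.sqrt (2 * Real.pi) * σ t) := by
        have := hβ t; have := hσ t; positivity
      have hlam := hlam0 t
      nlinarith [hs, hpos]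
  -- lam t = 0 for all t
  have hlamz : ∀ t, lam t = 0 := by
    intro t
    have := hcs t
    have := hrpos t
    rcases mul_eq_zero.mp (hcs t) with h | h
    · exact h
    · exact absurd h (ne_of_gt (hrpos t))
  -- key equation: 2 ν r t = A t
  have hkey : ∀ t, 2 * ν * r t = β t / (Real.sqrt (2 * Real.pi) * σ t)
      * Real.exp (-(r t) ^ 2 / (2 * (σ t) ^ 2)) := by
    intro t
    have hs := hstat t
    rw [hlamz t] at hs
    linarith
  -- ν > 0
  have hνpos : 0 < ν := by
    have t0 : Fin T := ⟨0, hT⟩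
    have h := hkey t0
    have hA0 := hA t0
    have hr := hrpos t0
    nlinarith
  refine ⟨hνpos, ?_, ?_⟩
  · have := hcomp
    rcases mul_eq_zero.mp hcomp with h | h
    · exact absurd h (ne_of_gt hνpos)
    · linarith
  · intro t
    refine ⟨hrpos t, hlamz t, ?_⟩
    have hs := hσ t
    have hb := hβ t
    have hsq : (2 * ν * r t) ^ 2 = (β t / (Real.sqrt (2 * Real.pi) * σ t)) ^ 2
        * Real.exp (-(r t) ^ 2 / (2 * (σ t) ^ 2)) ^ 2 := by
      rw [hkey t]; ring
    have hexp2 : Real.exp (-(r t) ^ 2 / (2 * (σ t) ^ 2)) ^ 2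
        = Real.exp (-((r t) ^ 2 / (σ t) ^ 2)) := by
      rw [sq, ← Real.exp_add]
      congr 1
      field_simp
      ring
    have hcoef : (β t / (Real.sqrt (2 * Real.pi) * σ t)) ^ 2
        = (β t) ^ 2 / (2 * Real.pi * (σ t) ^ 2) := by
      rw [div_pow, mul_pow, Real.sq_sqrt (by positivity : (0:ℝ) ≤ 2 * Real.pi)]
    rw [hexp2, hcoef] at hsq
    -- multiply both sides by exp((r t)^2/(σ t)^2)
    have hmul : (2 * ν * r t) ^ 2 * Real.exp ((r t) ^ 2 / (σ t) ^ 2)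
        = (β t) ^ 2 / (2 * Real.pi * (σ t) ^ 2) := by
      rw [hsq, mul_assoc, ← Real.exp_add, neg_add_cancel, Real.exp_zero, mul_one]
    have hdiv : (r t / σ t) ^ 2 = (r t) ^ 2 / (σ t) ^ 2 := by
      rw [div_pow]
    rw [hdiv]
    have hπ : 0 < Real.pi := Real.pi_pos
    have hmul2 : (2 * ν * r t) ^ 2 * Real.exp ((r t) ^ 2 / (σ t) ^ 2)
        * (2 * Real.pi * (σ t) ^ 2) = (β t) ^ 2 := by
      rw [hmul, div_mul_cancel₀]
      positivity
    field_simp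
    linear_combination hmul2
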